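/- Let $A = S(n,k)$ be the Hamming sphere of radius $k$ in $\mathbb{F}_2^n$ and let $f = \sum_{a \in A} y_a W_a$ with $\sum_a y_a^2 = 1$. Then $\mathbb{E} f^4 \le \sum_{t=0}^{k} \binom{2t}{t} \binom{k}{t}^2$. -/

import Mathlib

open Finset

/-- The Walsh-Fourier character `W_a(x) = (-1)^⟨a,x⟩` on `{0,1}^n ≅ 𝔽₂ⁿ`. -/
def walsh {n : ℕ} (a x : Fin n → ZMod 2) : ℝ := (-1 : ℝ) ^ (∑ i, (a i * x i).val)

/-- The Hamming sphere of radius `k` in `𝔽₂ⁿ`. -/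
def sphere (n k : ℕ) : Finset (Fin n → ZMod 2) :=
  Finset.univ.filter (fun x => hammingNorm x = k)

variable {n : ℕ}

/-- indicator vector of a finset -/
def ind (s : Finset (Fin n)) : Fin n → ZMod 2 := fun i => if i ∈ s then 1 else 0

def supp (x : Fin n → ZMod 2) : Finset (Fin n) := {i | x i = 1}

open scoped symmDiff

lemma zmod2_cases (u : ZMod 2) : u = 0 ∨ u = 1 := by revert u; decide

lemma supp_ind (s : Finset (Fin n)) : supp (ind s) = s := by
  ext i; simp [supp, ind]

lemma ind_supp (x : Fin n → ZMod 2) : ind (supp x) = x := by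
  funext i
  rcases zmod2_cases (x i) with h | h <;> simp [supp, ind, h]

lemma ind_symmDiff (s t : Finset (Fin n)) : ind (s ∆ t) = ind s + ind t := by
  funext i
  by_cases hs : i ∈ s <;> by_cases ht : i ∈ t <;>
    simp [ind, symmDiff_def, hs, ht, Pi.add_apply] <;> decide

lemma hammingNorm_ind (s : Finset (Fin n)) : hammingNorm (ind s) = s.card := by
  unfold hammingNorm ind
  congr 1
  ext i
  by_cases h : i ∈ s <;> simp [h]

lemma ind_mem_sphere (k : ℕ) (s : Finset (Fin n)) :
    ind s ∈ sphere n k ↔ s.card = k := by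
  simp [sphere, hammingNorm_ind]

lemma neg_one_pow_mod_two (m : ℕ) : (-1 : ℝ) ^ m = (-1) ^ (m % 2) :=
  neg_one_pow_eq_pow_mod_two m

lemma walsh_mul (a b x : Fin n → ZMod 2) :
    walsh a x * walsh b x = walsh (a + b) x := by
  unfold walsh
  rw [← pow_add, neg_one_pow_mod_two, neg_one_pow_mod_two (∑ i, (((a + b) i) * x i).val)]
  congr 1
  rw [← Finset.sum_add_distrib, Finset.sum_nat_mod,
    Finset.sum_nat_mod _ 2 (fun i => (((a + b) i) * x i).val)]
  congr 1
  apply Finset.sum_congr rfl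
  intro i _
  have : ((a + b) i) * x i = a i * x i + b i * x i := by
    simp [Pi.add_apply, add_mul]
  rw [this, ZMod.val_add]
  simp [Nat.mod_mod_of_dvd]

lemma walsh_zero (x : Fin n → ZMod 2) : walsh 0 x = 1 := by
  simp [walsh]

lemma sum_walsh (c : Fin n → ZMod 2) :
    ∑ x : Fin n → ZMod 2, walsh c x = if c = 0 then (2 : ℝ) ^ n else 0 := by
  split
  · subst ‹c = 0›
    simp [walsh_zero, Finset.card_univ]
  · rename_i hc
    have ⟨i, hi⟩ : ∃ i, c i ≠ 0 := by
      by_contra h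
      push_neg at h
      exact hc (funext fun i => h i)
    have hci : c i = 1 := by rcases zmod2_cases (c i) with h | h; exact absurd h hi; exact h
    apply Finset.sum_ninvolution (fun x => Function.update x i (x i + 1))
    · intro x
      have key : walsh c (Function.update x i (x i + 1)) = - walsh c x := by
        unfold walsh
        have hsplit : ∀ z : Fin n → ZMod 2, (∑ j, (c j * z j).val)
            = (c i * z i).val + ∑ j ∈ Finset.univ.erase i, (c j * z j).val :=
          fun z => (Finset.add_sum_erase _ _ (Finset.mem_univ i)).symm
        rw [hsplit, hsplit, pow_add, pow_add]
        have h2 : ∀ j ∈ Finset.univ.erase i, ((c j * (Function.update x i (x i + 1)) j).val)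
            = (c j * x j).val := by
          intro j hj
          rw [Function.update_of_ne (Finset.ne_of_mem_erase hj)]
        rw [Finset.sum_congr rfl h2]
        have : Function.update x i (x i + 1) i = x i + 1 := Function.update_self _ _ _
        rw [this, hci]
        rcases zmod2_cases (x i) with h | h <;> rw [h] <;>
          norm_num [show ((1:ZMod 2)).val = 1 from rfl, show ((2:ZMod 2)).val = 0 from rfl,
            show ((0:ZMod 2)).val = 0 from rfl]
      rw [key]; ring
    · intro x _ h
      have := congrFun h i
      rw [Function.update_self] at this
      rcases zmod2_cases (x i) with h' | h' <;> rw [h'] at this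
      · exact absurd this.symm (by decide)
      · exact absurd this (by decide)
    · intro x; exact Finset.mem_univ _
    · intro x
      funext j
      by_cases hj : j = i
      · subst hj; rw [Function.update_self, Function.update_self]
        rcases zmod2_cases (x j) with h | h <;> rw [h] <;> decide
      · rw [Function.update_of_ne hj, Function.update_of_ne hj]

lemma add_self_vec (a : Fin n → ZMod 2) : a + a = 0 := by
  funext i
  rcases zmod2_cases (a i) with h | h <;> simp [Pi.add_apply, h] <;> decide

/-- Convolution square coefficient. -/
noncomputable def gc (k : ℕ) (y : (Fin n → ZMod 2) → ℝ) (z : Fin n → ZMod 2) : ℝ :=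
  ∑ a ∈ sphere n k, if a + z ∈ sphere n k then y a * y (a + z) else 0

lemma sq_expand (k : ℕ) (y : (Fin n → ZMod 2) → ℝ) (x : Fin n → ZMod 2) :
    (∑ a ∈ sphere n k, y a * walsh a x) ^ 2 = ∑ z, gc k y z * walsh z x := by
  rw [sq, Finset.sum_mul_sum]
  unfold gc
  simp only [Finset.sum_mul]
  rw [Finset.sum_comm (s := Finset.univ)]
  apply Finset.sum_congr rfl
  intro a _
  have step : ∑ z : Fin n → ZMod 2,
      (if a + z ∈ sphere n k then y a * y (a + z) else 0) * walsh z x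
      = ∑ b : Fin n → ZMod 2, (if b ∈ sphere n k then y a * y b else 0) * walsh (a + b) x := by
    apply Fintype.sum_equiv (Equiv.addLeft a)
    intro b
    have : a + (a + b) = b := by rw [← add_assoc, add_self_vec, zero_add]
    simp only [Equiv.coe_addLeft, this]
    congr
  rw [step]
  simp only [ite_mul, zero_mul]
  rw [Finset.sum_ite_mem, Finset.univ_inter]
  apply Finset.sum_congr rfl
  intro b _
  rw [← walsh_mul]
  ring

lemma parseval (k : ℕ) (y : (Fin n → ZMod 2) → ℝ) :
    ∑ x, (∑ a ∈ sphere n k, y a * walsh a x) ^ 4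
      = 2 ^ n * ∑ z, (gc k y z) ^ 2 := by
  have h4 : ∀ x, (∑ a ∈ sphere n k, y a * walsh a x) ^ 4
      = ((∑ a ∈ sphere n k, y a * walsh a x) ^ 2) ^ 2 := by intro x; ring
  simp only [h4, sq_expand]
  have expand : ∀ x, (∑ z, gc k y z * walsh z x) ^ 2
      = ∑ z, ∑ w, gc k y z * gc k y w * (walsh z x * walsh w x) := by
    intro x
    rw [sq, Finset.sum_mul_sum]
    apply Finset.sum_congr rfl; intro z _
    apply Finset.sum_congr rfl; intro w _
    ring
  simp only [expand]
  rw [Finset.sum_comm]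
  have inner : ∀ z : Fin n → ZMod 2, ∑ x, ∑ w, gc k y z * gc k y w * (walsh z x * walsh w x)
      = (gc k y z) ^ 2 * 2 ^ n := by
    intro z
    rw [Finset.sum_comm]
    have : ∀ w : Fin n → ZMod 2, ∑ x, gc k y z * gc k y w * (walsh z x * walsh w x)
        = gc k y z * gc k y w * (if z + w = 0 then (2:ℝ)^n else 0) := by
      intro w
      rw [← Finset.mul_sum]
      congr 1
      rw [← sum_walsh]
      apply Finset.sum_congr rfl
      intro x _
      exact walsh_mul z w x
    simp only [this]
    have hzw : ∀ w : Fin n → ZMod 2, z + w = 0 ↔ w = z := by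
      intro w
      constructor
      · intro h
        have := congrArg (z + ·) h
        simp only [← add_assoc, add_self_vec, zero_add, add_zero] at this
        exact this
      · rintro rfl; exact add_self_vec _
    simp only [mul_ite, mul_zero, hzw]
    rw [Finset.sum_ite_eq' Finset.univ z]
    simp [sq]
  simp only [inner]
  rw [← Finset.sum_mul]
  ring

lemma card_symmDiff_rel (s u : Finset (Fin n)) :
    (s ∆ u).card + 2 * (s ∩ u).card = s.card + u.card := by
  have h1 : (s ∩ u).card + (s \ u).card = s.card := Finset.card_inter_add_card_sdiff s u
  have h2 : (u ∩ s).card + (u \ s).card = u.card := Finset.card_inter_add_card_sdiff u s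
  have h3 : (s ∆ u).card = (s \ u).card + (u \ s).card := by
    rw [symmDiff_def, Finset.sup_eq_union]
    exact Finset.card_union_of_disjoint disjoint_sdiff_sdiff
  rw [Finset.inter_comm u s] at h2
  omega

lemma symmDiff_inter (s u : Finset (Fin n)) : (s ∆ u) ∩ u = u \ (s ∩ u) := by
  ext i
  simp only [Finset.mem_inter, Finset.mem_symmDiff, Finset.mem_sdiff]
  tauto

noncomputable def Hc (k : ℕ) (Y : Finset (Fin n) → ℝ) (u S : Finset (Fin n)) : ℝ :=
  ∑ s ∈ (Finset.powersetCard k (Finset.univ : Finset (Fin n))).filter (fun s => s ∩ u = S),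
    Y s * Y (s ∆ u)

noncomputable def Qc (k : ℕ) (Y : Finset (Fin n) → ℝ) (S T : Finset (Fin n)) : ℝ :=
  ∑ s ∈ (Finset.powersetCard k (Finset.univ : Finset (Fin n))).filter
      (fun s => s ∩ (S ∪ T) = S), Y s ^ 2

lemma stepA (k t : ℕ) (Y : Finset (Fin n) → ℝ) (u : Finset (Fin n)) (hcu : u.card = 2 * t) :
    (∑ s ∈ Finset.powersetCard k (Finset.univ : Finset (Fin n)),
        if (s ∆ u).card = k then Y s * Y (s ∆ u) else 0)
      = ∑ S ∈ Finset.powersetCard t u, Hc k Y u S := by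
  rw [← Finset.sum_fiberwise_of_maps_to (g := fun s => s ∩ u) (t := u.powerset)
    (fun s _ => Finset.mem_powerset.2 Finset.inter_subset_right)]
  have hsub : Finset.powersetCard t u ⊆ u.powerset := by
    intro S hS
    exact Finset.mem_powerset.2 (Finset.mem_powersetCard.1 hS).1
  rw [← Finset.sum_subset hsub ?vanish]
  · apply Finset.sum_congr rfl
    intro S hS
    obtain ⟨hSu, hSt⟩ := Finset.mem_powersetCard.1 hS
    unfold Hc
    apply Finset.sum_congr rfl
    intro s hs
    rw [Finset.mem_filter, Finset.mem_powersetCard] at hs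
    obtain ⟨⟨-, hsk⟩, hsu⟩ := hs
    have hrel := card_symmDiff_rel s u
    rw [hsu, hSt, hsk, hcu] at hrel
    rw [if_pos (by omega)]
  case vanish =>
    intro S hSp hSn
    apply Finset.sum_eq_zero
    intro s hs
    rw [Finset.mem_filter, Finset.mem_powersetCard] at hs
    obtain ⟨⟨-, hsk⟩, hsu⟩ := hs
    rw [if_neg]
    intro hcard
    apply hSn
    rw [Finset.mem_powersetCard]
    refine ⟨Finset.mem_powerset.1 hSp, ?_⟩
    have hrel := card_symmDiff_rel s u
    rw [hsu, hsk, hcu, hcard] at hrel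
    omega

lemma stepC (k t : ℕ) (Y : Finset (Fin n) → ℝ) (u : Finset (Fin n)) (hcu : u.card = 2 * t)
    (S : Finset (Fin n)) (hS : S ∈ Finset.powersetCard t u) :
    Hc k Y u S ^ 2 ≤ Qc k Y S (u \ S) * Qc k Y (u \ S) S := by
  obtain ⟨hSu, hSt⟩ := Finset.mem_powersetCard.1 hS
  have hSuU : S ∪ (u \ S) = u := Finset.union_sdiff_of_subset hSu
  have hUS : (u \ S) ∪ S = u := by rw [Finset.union_comm]; exact hSuU
  have CS := Finset.sum_mul_sq_le_sq_mul_sq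
    ((Finset.powersetCard k (Finset.univ : Finset (Fin n))).filter (fun s => s ∩ u = S))
    (fun s => Y s) (fun s => Y (s ∆ u))
  unfold Hc
  refine le_trans CS ?_
  unfold Qc
  rw [hSuU, hUS]
  apply le_of_eq
  congr 1
  apply Finset.sum_nbij' (fun s => s ∆ u) (fun b => b ∆ u)
  · intro s hs
    rw [Finset.mem_filter, Finset.mem_powersetCard] at hs ⊢
    obtain ⟨⟨-, hsk⟩, hsu⟩ := hs
    have hrel := card_symmDiff_rel s u
    have hint : (s ∆ u) ∩ u = u \ S := by rw [symmDiff_inter, hsu]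
    refine ⟨⟨Finset.subset_univ _, ?_⟩, hint⟩
    rw [hsu, hSt, hsk, hcu] at hrel
    omega
  · intro b hb
    rw [Finset.mem_filter, Finset.mem_powersetCard] at hb ⊢
    obtain ⟨⟨-, hbk⟩, hbu⟩ := hb
    have hrel := card_symmDiff_rel b u
    have hcard : (u \ S).card = t := by
      rw [Finset.card_sdiff_of_subset hSu, hcu, hSt]; omega
    have hint : (b ∆ u) ∩ u = S := by
      rw [symmDiff_inter, hbu, Finset.sdiff_sdiff_eq_self hSu]
    refine ⟨⟨Finset.subset_univ _, ?_⟩, hint⟩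
    rw [hbu, hcard, hbk, hcu] at hrel
    omega
  · intro s _; exact symmDiff_symmDiff_cancel_right u s
  · intro b _; exact symmDiff_symmDiff_cancel_right u b
  · intro s _; rfl

lemma stepD (k t : ℕ) (Y : Finset (Fin n) → ℝ) :
    ∑ u ∈ (Finset.univ : Finset (Finset (Fin n))).filter (fun u => u.card = 2 * t),
        ∑ S ∈ Finset.powersetCard t u, Qc k Y S (u \ S) * Qc k Y (u \ S) S
      = ∑ p ∈ ((Finset.powersetCard t (Finset.univ : Finset (Fin n))) ×ˢ
            (Finset.powersetCard t (Finset.univ : Finset (Fin n)))).filter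
            (fun p => Disjoint p.1 p.2),
          Qc k Y p.1 p.2 * Qc k Y p.2 p.1 := by
  have inner_rw : ∀ u : Finset (Fin n),
      ∑ S ∈ Finset.powersetCard t u, Qc k Y S (u \ S) * Qc k Y (u \ S) S
      = ∑ S ∈ Finset.powersetCard t (Finset.univ : Finset (Fin n)),
          if S ⊆ u then Qc k Y S (u \ S) * Qc k Y (u \ S) S else 0 := by
    intro u
    rw [← Finset.sum_filter]
    congr 1
    ext S
    simp only [Finset.mem_powersetCard, Finset.mem_filter, Finset.subset_univ, true_and]
    tauto
  simp only [inner_rw]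
  rw [← Finset.sum_product']
  rw [← Finset.sum_filter]
  apply Finset.sum_nbij' (fun q => (q.2, q.1 \ q.2)) (fun p => (p.1 ∪ p.2, p.1))
  · intro q hq
    simp only [Finset.mem_filter, Finset.mem_product, Finset.mem_powersetCard,
      Finset.subset_univ, Finset.mem_univ, true_and] at hq ⊢
    obtain ⟨⟨hq1, hq2⟩, hq21⟩ := hq
    refine ⟨⟨hq2, ?_⟩, Finset.disjoint_sdiff⟩
    rw [Finset.card_sdiff_of_subset hq21, hq1, hq2]; omega
  · intro p hp
    simp only [Finset.mem_filter, Finset.mem_product, Finset.mem_powersetCard,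
      Finset.subset_univ, Finset.mem_univ, true_and] at hp ⊢
    obtain ⟨⟨hp1, hp2⟩, hd⟩ := hp
    refine ⟨⟨?_, hp1⟩, Finset.subset_union_left⟩
    rw [Finset.card_union_of_disjoint hd, hp1, hp2]; omega
  · intro q hq
    simp only [Finset.mem_filter, Finset.mem_product] at hq
    exact Prod.ext (Finset.union_sdiff_of_subset hq.2) rfl
  · intro p hp
    simp only [Finset.mem_filter, Finset.mem_product] at hp
    exact Prod.ext rfl (Finset.union_sdiff_cancel_left hp.2)
  · intro q _; rfl

lemma stepE (k t : ℕ) (Y : Finset (Fin n) → ℝ)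
    (hY : ∑ s ∈ Finset.powersetCard k (Finset.univ : Finset (Fin n)), Y s ^ 2 = 1) :
    ∑ p ∈ ((Finset.powersetCard t (Finset.univ : Finset (Fin n))) ×ˢ
          (Finset.powersetCard t (Finset.univ : Finset (Fin n)))).filter
          (fun p => Disjoint p.1 p.2),
        Qc k Y p.1 p.2 * Qc k Y p.2 p.1
      ≤ ((k.choose t : ℝ)) ^ 2 := by
  classical
  set Sk := Finset.powersetCard k (Finset.univ : Finset (Fin n)) with hSk
  set Pairs := ((Finset.powersetCard t (Finset.univ : Finset (Fin n))) ×ˢ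
      (Finset.powersetCard t (Finset.univ : Finset (Fin n)))).filter
      (fun p => Disjoint p.1 p.2) with hPairs
  have hQ_ite : ∀ S T : Finset (Fin n), Qc k Y S T
      = ∑ s ∈ Sk, if s ∩ (S ∪ T) = S then Y s ^ 2 else 0 := by
    intro S T
    rw [Qc, Finset.sum_filter]
  have expand : ∀ p : Finset (Fin n) × Finset (Fin n),
      Qc k Y p.1 p.2 * Qc k Y p.2 p.1
      = ∑ s ∈ Sk, ∑ b ∈ Sk,
          if s ∩ (p.1 ∪ p.2) = p.1 ∧ b ∩ (p.2 ∪ p.1) = p.2 then Y s ^ 2 * Y b ^ 2 else 0 := by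
    intro p
    rw [hQ_ite, hQ_ite, Finset.sum_mul_sum]
    apply Finset.sum_congr rfl; intro s _
    apply Finset.sum_congr rfl; intro b _
    split_ifs with h1 h2 h3 <;> simp_all
  simp only [expand]
  rw [Finset.sum_comm]
  have key : ∀ s ∈ Sk, ∑ p ∈ Pairs, ∑ b ∈ Sk,
      (if s ∩ (p.1 ∪ p.2) = p.1 ∧ b ∩ (p.2 ∪ p.1) = p.2 then Y s ^ 2 * Y b ^ 2 else 0)
      ≤ ∑ b ∈ Sk, ((k.choose t : ℝ)) ^ 2 * (Y s ^ 2 * Y b ^ 2) := by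
    intro s hs
    rw [Finset.sum_comm]
    apply Finset.sum_le_sum
    intro b hb
    have hcount : ∑ p ∈ Pairs,
        (if s ∩ (p.1 ∪ p.2) = p.1 ∧ b ∩ (p.2 ∪ p.1) = p.2 then Y s ^ 2 * Y b ^ 2 else 0)
        = ((Pairs.filter (fun p => s ∩ (p.1 ∪ p.2) = p.1 ∧ b ∩ (p.2 ∪ p.1) = p.2)).card : ℝ)
          * (Y s ^ 2 * Y b ^ 2) := by
      rw [← Finset.sum_filter, Finset.sum_const, nsmul_eq_mul]
    rw [hcount]
    have hsk : s.card = k := (Finset.mem_powersetCard.1 hs).2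
    have hbk : b.card = k := (Finset.mem_powersetCard.1 hb).2
    have hsubset : Pairs.filter (fun p => s ∩ (p.1 ∪ p.2) = p.1 ∧ b ∩ (p.2 ∪ p.1) = p.2)
        ⊆ (Finset.powersetCard t s) ×ˢ (Finset.powersetCard t b) := by
      intro p hp
      rw [Finset.mem_filter] at hp
      obtain ⟨hpP, hc1, hc2⟩ := hp
      rw [hPairs, Finset.mem_filter, Finset.mem_product, Finset.mem_powersetCard,
        Finset.mem_powersetCard] at hpP
      rw [Finset.mem_product, Finset.mem_powersetCard, Finset.mem_powersetCard]
      refine ⟨⟨?_, hpP.1.1.2⟩, ?_, hpP.1.2.2⟩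
      · rw [← hc1]; exact Finset.inter_subset_left
      · rw [← hc2]; exact Finset.inter_subset_left
    have hcard : ((Pairs.filter (fun p => s ∩ (p.1 ∪ p.2) = p.1
          ∧ b ∩ (p.2 ∪ p.1) = p.2)).card : ℝ) ≤ ((k.choose t : ℝ)) ^ 2 := by
      have := Finset.card_le_card hsubset
      rw [Finset.card_product, Finset.card_powersetCard, Finset.card_powersetCard,
        hsk, hbk] at this
      calc ((Pairs.filter _).card : ℝ) ≤ ((k.choose t * k.choose t : ℕ) : ℝ) := by
            exact_mod_cast this
        _ = ((k.choose t : ℝ)) ^ 2 := by push_cast; ring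
    apply mul_le_mul_of_nonneg_right hcard (by positivity)
  calc ∑ s ∈ Sk, ∑ p ∈ Pairs, ∑ b ∈ Sk,
        (if s ∩ (p.1 ∪ p.2) = p.1 ∧ b ∩ (p.2 ∪ p.1) = p.2 then Y s ^ 2 * Y b ^ 2 else 0)
      ≤ ∑ s ∈ Sk, ∑ b ∈ Sk, ((k.choose t : ℝ)) ^ 2 * (Y s ^ 2 * Y b ^ 2) :=
        Finset.sum_le_sum key
    _ = ((k.choose t : ℝ)) ^ 2 := by
        have heq : ∑ s ∈ Sk, ∑ b ∈ Sk, ((k.choose t : ℝ)) ^ 2 * (Y s ^ 2 * Y b ^ 2)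
            = ((k.choose t : ℝ)) ^ 2 * ((∑ s ∈ Sk, Y s ^ 2) * (∑ b ∈ Sk, Y b ^ 2)) := by
          rw [Finset.sum_mul_sum, Finset.mul_sum]
          apply Finset.sum_congr rfl; intro s _
          rw [Finset.mul_sum]
        rw [heq, hY, mul_one, mul_one]

lemma per_t (k t : ℕ) (Y : Finset (Fin n) → ℝ)
    (hY : ∑ s ∈ Finset.powersetCard k (Finset.univ : Finset (Fin n)), Y s ^ 2 = 1) :
    ∑ u ∈ (Finset.univ : Finset (Finset (Fin n))).filter (fun u => u.card = 2 * t),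
      (∑ s ∈ Finset.powersetCard k (Finset.univ : Finset (Fin n)),
        if (s ∆ u).card = k then Y s * Y (s ∆ u) else 0) ^ 2
      ≤ ((2 * t).choose t : ℝ) * ((k.choose t : ℝ)) ^ 2 := by
  calc ∑ u ∈ (Finset.univ : Finset (Finset (Fin n))).filter (fun u => u.card = 2 * t),
        (∑ s ∈ Finset.powersetCard k (Finset.univ : Finset (Fin n)),
          if (s ∆ u).card = k then Y s * Y (s ∆ u) else 0) ^ 2
      = ∑ u ∈ (Finset.univ : Finset (Finset (Fin n))).filter (fun u => u.card = 2 * t),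
          (∑ S ∈ Finset.powersetCard t u, Hc k Y u S) ^ 2 := by
        apply Finset.sum_congr rfl
        intro u hu
        rw [stepA k t Y u (Finset.mem_filter.1 hu).2]
    _ ≤ ∑ u ∈ (Finset.univ : Finset (Finset (Fin n))).filter (fun u => u.card = 2 * t),
          ((2 * t).choose t : ℝ) * ∑ S ∈ Finset.powersetCard t u, (Hc k Y u S) ^ 2 := by
        apply Finset.sum_le_sum
        intro u hu
        have h := sq_sum_le_card_mul_sum_sq (s := Finset.powersetCard t u) (f := Hc k Y u)
        rwa [Finset.card_powersetCard, (Finset.mem_filter.1 hu).2] at h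
    _ ≤ ∑ u ∈ (Finset.univ : Finset (Finset (Fin n))).filter (fun u => u.card = 2 * t),
          ((2 * t).choose t : ℝ) *
            ∑ S ∈ Finset.powersetCard t u, Qc k Y S (u \ S) * Qc k Y (u \ S) S := by
        apply Finset.sum_le_sum
        intro u hu
        apply mul_le_mul_of_nonneg_left _ (by positivity)
        apply Finset.sum_le_sum
        intro S hS
        exact stepC k t Y u (Finset.mem_filter.1 hu).2 S hS
    _ = ((2 * t).choose t : ℝ) *
          ∑ u ∈ (Finset.univ : Finset (Finset (Fin n))).filter (fun u => u.card = 2 * t),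
            ∑ S ∈ Finset.powersetCard t u, Qc k Y S (u \ S) * Qc k Y (u \ S) S := by
        rw [Finset.mul_sum]
    _ ≤ ((2 * t).choose t : ℝ) * ((k.choose t : ℝ)) ^ 2 := by
        apply mul_le_mul_of_nonneg_left _ (by positivity)
        rw [stepD k t Y]
        exact stepE k t Y hY

lemma card_supp (x : Fin n → ZMod 2) : (supp x).card = hammingNorm x := by
  conv_rhs => rw [← ind_supp x]
  rw [hammingNorm_ind]

lemma mem_sphere_iff (k : ℕ) (a : Fin n → ZMod 2) : a ∈ sphere n k ↔ hammingNorm a = k := by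
  simp [sphere]

lemma gc_formula (k : ℕ) (y : (Fin n → ZMod 2) → ℝ) (u : Finset (Fin n)) :
    gc k y (ind u) = ∑ s ∈ Finset.powersetCard k (Finset.univ : Finset (Fin n)),
      if (s ∆ u).card = k then y (ind s) * y (ind (s ∆ u)) else 0 := by
  unfold gc
  apply Finset.sum_nbij' (fun a => supp a) (fun s => ind s)
  · intro a ha
    rw [Finset.mem_powersetCard]
    exact ⟨Finset.subset_univ _, by rw [card_supp]; exact (mem_sphere_iff k a).1 ha⟩
  · intro s hs
    rw [ind_mem_sphere]
    exact (Finset.mem_powersetCard.1 hs).2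
  · intro a _; exact ind_supp a
  · intro s _; exact supp_ind s
  · intro a _
    have key : a + ind u = ind (supp a ∆ u) := by rw [ind_symmDiff, ind_supp]
    simp only [key, ind_mem_sphere, ind_supp]

lemma gc_vanish (k : ℕ) (y : (Fin n → ZMod 2) → ℝ) (u : Finset (Fin n))
    (h : ¬ ∃ t ∈ Finset.range (k + 1), u.card = 2 * t) :
    gc k y (ind u) = 0 := by
  rw [gc_formula]
  apply Finset.sum_eq_zero
  intro s hs
  rw [if_neg]
  intro hcard
  apply h
  have hsk : s.card = k := (Finset.mem_powersetCard.1 hs).2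
  have hrel := card_symmDiff_rel s u
  have hle : (s ∩ u).card ≤ k := by
    rw [← hsk]; exact Finset.card_le_card Finset.inter_subset_left
  refine ⟨(s ∩ u).card, Finset.mem_range.2 (by omega), by omega⟩

def indEquiv (n : ℕ) : Finset (Fin n) ≃ (Fin n → ZMod 2) :=
  ⟨ind, supp, supp_ind, ind_supp⟩

theorem stmt_19 (n k : ℕ) (hk : k ≤ n) (y : (Fin n → ZMod 2) → ℝ)
    (hy : ∑ a ∈ sphere n k, (y a) ^ 2 = 1) :
    (∑ x, (∑ a ∈ sphere n k, y a * walsh a x) ^ 4) / 2 ^ n ≤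
      ∑ t ∈ Finset.range (k + 1), ((2 * t).choose t * (k.choose t) ^ 2 : ℕ) := by
  have hY : ∑ s ∈ Finset.powersetCard k (Finset.univ : Finset (Fin n)),
      (y (ind s)) ^ 2 = 1 := by
    rw [← hy]
    apply Finset.sum_nbij' (fun s => ind s) (fun a => supp a)
    · intro s hs; rw [ind_mem_sphere]; exact (Finset.mem_powersetCard.1 hs).2
    · intro a ha
      rw [Finset.mem_powersetCard]
      exact ⟨Finset.subset_univ _, by rw [card_supp]; exact (mem_sphere_iff k a).1 ha⟩
    · intro s _; exact supp_ind s
    · intro a _; exact ind_supp a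
    · intro s _; rfl
  have hpar := parseval k y
  rw [hpar]
  have h2n : (0:ℝ) < 2 ^ n := by positivity
  rw [mul_comm, mul_div_assoc, div_self (ne_of_gt h2n), mul_one]
  -- transfer to finsets
  have htrans : ∑ z, (gc k y z) ^ 2 = ∑ u : Finset (Fin n), (gc k y (ind u)) ^ 2 :=
    (Fintype.sum_equiv (indEquiv n) (fun u => (gc k y (ind u)) ^ 2)
      (fun z => (gc k y z) ^ 2) (fun u => rfl)).symm
  rw [htrans]
  have hP : ∀ u : Finset (Fin n), ¬ (u.card % 2 = 0 ∧ u.card ≤ 2 * k) →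
      (gc k y (ind u)) ^ 2 = 0 := by
    intro u hu
    rw [gc_vanish k y u ?_]
    · ring
    · rintro ⟨t, ht1, ht2⟩
      rw [Finset.mem_range] at ht1
      exact hu (by omega)
  have hsplit : ∑ u : Finset (Fin n), (gc k y (ind u)) ^ 2
      = ∑ u ∈ (Finset.univ : Finset (Finset (Fin n))).filter
          (fun u => u.card % 2 = 0 ∧ u.card ≤ 2 * k), (gc k y (ind u)) ^ 2 := by
    symm
    apply Finset.sum_subset (Finset.filter_subset _ _)
    intro u _ hu
    apply hP
    intro hex
    exact hu (Finset.mem_filter.2 ⟨Finset.mem_univ _, hex⟩)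
  rw [hsplit]
  have hbU : (Finset.univ : Finset (Finset (Fin n))).filter
        (fun u => u.card % 2 = 0 ∧ u.card ≤ 2 * k)
      = (Finset.range (k + 1)).biUnion
          (fun t => (Finset.univ : Finset (Finset (Fin n))).filter (fun u => u.card = 2 * t)) := by
    ext u
    simp only [Finset.mem_filter, Finset.mem_biUnion, Finset.mem_univ, true_and,
      Finset.mem_range]
    constructor
    · rintro ⟨h1, h2⟩
      exact ⟨u.card / 2, by omega, by omega⟩
    · rintro ⟨t, ht1, ht2⟩
      omega
  rw [hbU, Finset.sum_biUnion]
  · push_cast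
    apply Finset.sum_le_sum
    intro t _
    have h1 : ∀ u ∈ (Finset.univ : Finset (Finset (Fin n))).filter (fun u => u.card = 2 * t),
        (gc k y (ind u)) ^ 2
        = (∑ s ∈ Finset.powersetCard k (Finset.univ : Finset (Fin n)),
            if (s ∆ u).card = k then y (ind s) * y (ind (s ∆ u)) else 0) ^ 2 := by
      intro u _
      rw [gc_formula]
    calc ∑ u ∈ (Finset.univ : Finset (Finset (Fin n))).filter (fun u => u.card = 2 * t),
          (gc k y (ind u)) ^ 2
        = ∑ u ∈ (Finset.univ : Finset (Finset (Fin n))).filter (fun u => u.card = 2 * t),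
            (∑ s ∈ Finset.powersetCard k (Finset.univ : Finset (Fin n)),
              if (s ∆ u).card = k then y (ind s) * y (ind (s ∆ u)) else 0) ^ 2 :=
          Finset.sum_congr rfl h1
      _ ≤ _ := per_t k t (fun s => y (ind s)) hY
  · intro t1 ht1 t2 ht2 hne
    apply Finset.disjoint_left.2
    intro u hu1 hu2
    simp only [Finset.mem_filter] at hu1 hu2
    exact hne (by omega)
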